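/- Let 1 ≤ p < ∞, suppose μ(U_i) ≥ D > 0 for all i, and suppose sup_{x,y∈U_i} m_w(x,y) ≤ C_m for all i, where m_w(x,y) = max(w(x)/w(y), w(y)/w(x)). Fix z ∈ X and set v(x) = m_w(x,z). Then there exists a constant C, depending only on N, D, C_m, p and w(z), such that for every F ∈ L^p_w and every x ∈ X: Σ_{i∈I} ( ∫_{U_i} |F(y)| dμ(y) ) μ(U_i)^{-1} χ_{U_i}(x) ≤ C v(x) ‖F‖_{L^p_w}. (Lemma 5.5(a) specialized to Y = L^p_w: the embedding L^p_w ⊆ D(𝒰, L¹, (L^∞_{1/v})^♮).) -/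

import Mathlib

open MeasureTheory
open scoped ENNReal NNReal

private lemma holder_with_one {X : Type*} [MeasurableSpace X] (μ : Measure X)
    {s : Set X} {g : X → ℝ≥0∞} (hg : Measurable g) {p : ℝ} (hp : 1 ≤ p) :
    ∫⁻ y in s, g y ∂μ ≤ (∫⁻ y in s, g y ^ p ∂μ) ^ (1/p) * (μ s) ^ (1 - 1/p) := by
  rcases eq_or_lt_of_le hp with h1 | h1
  · rw [← h1]
    norm_num [ENNReal.rpow_one]
  · have hpq : p.HolderConjugate (Real.conjExponent p) :=
      Real.HolderConjugate.conjExponent h1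
    have H := ENNReal.lintegral_mul_le_Lp_mul_Lq (μ.restrict s) hpq
      hg.aemeasurable (aemeasurable_const (b := (1 : ℝ≥0∞)))
    simp only [Pi.mul_apply, Pi.one_apply, mul_one, ENNReal.one_rpow, lintegral_const, one_mul,
      Measure.restrict_apply MeasurableSet.univ, Set.univ_inter] at H
    have hq : 1 / Real.conjExponent p = 1 - 1/p := by
      rw [one_div, one_div, ← hpq.one_sub_inv]
    rwa [hq] at H

/-- **Lemma 5.5(a) specialized to `Y = L^p_w`.** The embedding
`L^p_w ⊆ D(𝒰, L¹, (L^∞_{1/v})^♮)`: with `v(x) = m_w(x,z)` one has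
`Σ_i (∫_{U_i} |F| dμ) μ(U_i)⁻¹ χ_{U_i}(x) ≤ C v(x) ‖F‖_{L^p_w}`. -/
theorem stmt_11
    {X : Type*} [MeasurableSpace X] (μ : Measure X)
    {I : Type*} [Countable I] (U : I → Set X)
    (hUmeas : ∀ i, MeasurableSet (U i))
    (hUpos : ∀ i, 0 < μ (U i)) (hUfin : ∀ i, μ (U i) < ∞)
    (hcov : ∀ x : X, ∃ i, x ∈ U i)
    (N : ℕ) (hN : ∀ x : X, {i : I | x ∈ U i}.encard ≤ N)
    (w : X → ℝ) (hw : ∀ x, 0 < w x) (hwm : Measurable w)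
    (p : ℝ) (hp : 1 ≤ p)
    (D : ℝ≥0∞) (hD : 0 < D) (hUD : ∀ i, D ≤ μ (U i))
    (Cm : ℝ) (hCm : ∀ i, ∀ x ∈ U i, ∀ y ∈ U i, max (w x / w y) (w y / w x) ≤ Cm)
    (z : X) :
    ∃ C : ℝ≥0∞, C < ∞ ∧ ∀ F : X → ℂ, Measurable F →
      (∫⁻ x, (‖F x‖₊ : ℝ≥0∞) ^ p * ENNReal.ofReal (w x) ^ p ∂μ) < ∞ →
      ∀ x : X,
        ∑' i, (∫⁻ y in U i, (‖F y‖₊ : ℝ≥0∞) ∂μ) * (μ (U i))⁻¹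
            * (U i).indicator (fun _ => (1 : ℝ≥0∞)) x
          ≤ C * ENNReal.ofReal (max (w x / w z) (w z / w x))
            * (∫⁻ y, (‖F y‖₊ : ℝ≥0∞) ^ p * ENNReal.ofReal (w y) ^ p ∂μ) ^ (1/p) := by
  classical
  obtain ⟨i₀, hi₀⟩ := hcov z
  have hDtop : D ≠ ∞ := ((hUD i₀).trans_lt (hUfin i₀)).ne
  have hp0 : (0:ℝ) < p := lt_of_lt_of_le one_pos hp
  set Cm' : ℝ := max Cm 1 with hCm'def
  have hCm'pos : (0:ℝ) < Cm' := lt_of_lt_of_le one_pos (le_max_right _ _)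
  have hDneg : D ^ (-(1/p)) ≠ ∞ := by
    rw [ENNReal.rpow_neg]
    exact ENNReal.inv_ne_top.mpr (ENNReal.rpow_pos hD hDtop).ne'
  refine ⟨(N : ℝ≥0∞) * ENNReal.ofReal Cm' * D ^ (-(1/p)) * (ENNReal.ofReal (w z))⁻¹, ?_, ?_⟩
  · rw [lt_top_iff_ne_top]
    refine ENNReal.mul_ne_top (ENNReal.mul_ne_top (ENNReal.mul_ne_top ?_ ?_) hDneg) ?_
    · exact ENNReal.natCast_ne_top N
    · exact ENNReal.ofReal_ne_top
    · exact ENNReal.inv_ne_top.mpr (ENNReal.ofReal_pos.mpr (hw z)).ne'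
  · intro F hF hJfin x
    set J : ℝ≥0∞ := ∫⁻ y, (‖F y‖₊ : ℝ≥0∞) ^ p * ENNReal.ofReal (w y) ^ p ∂μ with hJdef
    set g : X → ℝ≥0∞ := fun y => (‖F y‖₊ : ℝ≥0∞) * ENNReal.ofReal (w y) with hgdef
    have hgmeas : Measurable g := hF.nnnorm.coe_nnreal_ennreal.mul hwm.ennreal_ofReal
    set B : ℝ≥0∞ := ENNReal.ofReal Cm' * (ENNReal.ofReal (w x))⁻¹
      * (D ^ (-(1/p)) * J ^ (1/p)) with hBdef
    have hterm : ∀ i, x ∈ U i →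
        (∫⁻ y in U i, (‖F y‖₊ : ℝ≥0∞) ∂μ) * (μ (U i))⁻¹ ≤ B := by
      intro i hx
      have h1 : ∀ y ∈ U i, (‖F y‖₊ : ℝ≥0∞)
          ≤ g y * (ENNReal.ofReal Cm' * (ENNReal.ofReal (w x))⁻¹) := by
        intro y hy
        have hwxy : w x ≤ Cm' * w y := by
          have h := le_trans (le_max_left _ _) (hCm i x hx y hy)
          have := (div_le_iff₀ (hw y)).mp h
          nlinarith [hw y, le_max_left Cm (1:ℝ)]
        have ha : ENNReal.ofReal (w x) ≤ ENNReal.ofReal (w y) * ENNReal.ofReal Cm' := by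
          rw [← ENNReal.ofReal_mul (hw y).le]
          exact ENNReal.ofReal_le_ofReal (by linarith [mul_comm (w y) Cm'])
        have key : (1:ℝ≥0∞) ≤ ENNReal.ofReal (w y)
            * (ENNReal.ofReal Cm' * (ENNReal.ofReal (w x))⁻¹) := by
          rw [← mul_assoc, ← ENNReal.mul_inv_cancel
            (ENNReal.ofReal_pos.mpr (hw x)).ne' ENNReal.ofReal_ne_top]
          exact mul_le_mul_left ha _
        calc (‖F y‖₊ : ℝ≥0∞) = (‖F y‖₊ : ℝ≥0∞) * 1 := (mul_one _).symm
          _ ≤ (‖F y‖₊ : ℝ≥0∞) * (ENNReal.ofReal (w y)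
              * (ENNReal.ofReal Cm' * (ENNReal.ofReal (w x))⁻¹)) := mul_le_mul_right key _
          _ = g y * (ENNReal.ofReal Cm' * (ENNReal.ofReal (w x))⁻¹) := by
              rw [hgdef]; ring
      have h2 : (∫⁻ y in U i, (‖F y‖₊ : ℝ≥0∞) ∂μ)
          ≤ (∫⁻ y in U i, g y ∂μ) * (ENNReal.ofReal Cm' * (ENNReal.ofReal (w x))⁻¹) := by
        rw [← lintegral_mul_const _ hgmeas]
        exact setLIntegral_mono (hgmeas.mul_const _) h1
      have h3 : (∫⁻ y in U i, g y ∂μ) ≤ J ^ (1/p) * (μ (U i)) ^ (1 - 1/p) := by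
        refine (holder_with_one μ hgmeas hp).trans ?_
        have hJle : (∫⁻ y in U i, g y ^ p ∂μ) ≤ J := by
          calc (∫⁻ y in U i, g y ^ p ∂μ)
              = ∫⁻ y in U i, (‖F y‖₊ : ℝ≥0∞) ^ p * ENNReal.ofReal (w y) ^ p ∂μ := by
                simp only [hgdef, ENNReal.mul_rpow_of_nonneg _ _ hp0.le]
            _ ≤ J := setLIntegral_le_lintegral _ _
        exact mul_le_mul_left (ENNReal.rpow_le_rpow hJle (by positivity)) _
      have hμi : μ (U i) ^ (1 - 1/p) * (μ (U i))⁻¹ ≤ D ^ (-(1/p)) := by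
        have h4 : μ (U i) ^ (1 - 1/p) * (μ (U i))⁻¹ = μ (U i) ^ (-(1/p)) := by
          rw [← ENNReal.rpow_neg_one, ← ENNReal.rpow_add _ _ (hUpos i).ne' (hUfin i).ne]
          congr 1
          ring
        rw [h4, ENNReal.rpow_neg, ENNReal.rpow_neg]
        exact ENNReal.inv_le_inv.mpr (ENNReal.rpow_le_rpow (hUD i) (by positivity))
      calc (∫⁻ y in U i, (‖F y‖₊ : ℝ≥0∞) ∂μ) * (μ (U i))⁻¹
          ≤ ((J ^ (1/p) * μ (U i) ^ (1 - 1/p))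
              * (ENNReal.ofReal Cm' * (ENNReal.ofReal (w x))⁻¹)) * (μ (U i))⁻¹ :=
            mul_le_mul_left (h2.trans (mul_le_mul_left h3 _)) _
        _ = (ENNReal.ofReal Cm' * (ENNReal.ofReal (w x))⁻¹)
              * (J ^ (1/p) * (μ (U i) ^ (1 - 1/p) * (μ (U i))⁻¹)) := by ring
        _ ≤ (ENNReal.ofReal Cm' * (ENNReal.ofReal (w x))⁻¹)
              * (J ^ (1/p) * D ^ (-(1/p))) :=
            mul_le_mul_right (mul_le_mul_right hμi _) _
        _ = B := by rw [hBdef]; ring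
    have hSfin : {i : I | x ∈ U i}.Finite := Set.finite_of_encard_le_coe (hN x)
    have hcard : hSfin.toFinset.card ≤ N := by
      have h := hN x
      rw [hSfin.encard_eq_coe_toFinset_card] at h
      exact_mod_cast h
    have hinv : (ENNReal.ofReal (w x))⁻¹
        ≤ ENNReal.ofReal (max (w x / w z) (w z / w x)) * (ENNReal.ofReal (w z))⁻¹ := by
      rw [← ENNReal.ofReal_inv_of_pos (hw x), ← ENNReal.ofReal_inv_of_pos (hw z),
        ← ENNReal.ofReal_mul (le_trans (div_nonneg (hw x).le (hw z).le) (le_max_left (w x / w z) (w z / w x)))]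
      apply ENNReal.ofReal_le_ofReal
      calc (w x)⁻¹ = (w z / w x) * (w z)⁻¹ := by
            field_simp [(hw x).ne', (hw z).ne']
        _ ≤ max (w x / w z) (w z / w x) * (w z)⁻¹ :=
          mul_le_mul_of_nonneg_right (le_max_right _ _) (inv_nonneg.mpr (hw z).le)
    calc ∑' i, (∫⁻ y in U i, (‖F y‖₊ : ℝ≥0∞) ∂μ) * (μ (U i))⁻¹
            * (U i).indicator (fun _ => (1 : ℝ≥0∞)) x
        = ∑ i ∈ hSfin.toFinset, (∫⁻ y in U i, (‖F y‖₊ : ℝ≥0∞) ∂μ) * (μ (U i))⁻¹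
            * (U i).indicator (fun _ => (1 : ℝ≥0∞)) x := by
          refine tsum_eq_sum ?_
          intro i hi
          rw [Set.Finite.mem_toFinset, Set.mem_setOf_eq] at hi
          rw [Set.indicator_of_notMem hi, mul_zero]
      _ ≤ ∑ i ∈ hSfin.toFinset, B := by
          refine Finset.sum_le_sum ?_
          intro i hi
          rw [Set.Finite.mem_toFinset, Set.mem_setOf_eq] at hi
          rw [Set.indicator_of_mem hi, mul_one]
          exact hterm i hi
      _ = (hSfin.toFinset.card : ℝ≥0∞) * B := by rw [Finset.sum_const, nsmul_eq_mul]
      _ ≤ (N : ℝ≥0∞) * B := mul_le_mul_left (by exact_mod_cast hcard) _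
      _ ≤ (N : ℝ≥0∞) * (ENNReal.ofReal Cm'
            * (ENNReal.ofReal (max (w x / w z) (w z / w x)) * (ENNReal.ofReal (w z))⁻¹)
            * (D ^ (-(1/p)) * J ^ (1/p))) :=
          mul_le_mul_right (mul_le_mul_left (mul_le_mul_right hinv _) _) _
      _ = (N : ℝ≥0∞) * ENNReal.ofReal Cm' * D ^ (-(1/p)) * (ENNReal.ofReal (w z))⁻¹
            * ENNReal.ofReal (max (w x / w z) (w z / w x)) * J ^ (1/p) := by ring
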